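/- Soundness of the approximate extended semantics: let P be a Γ-extended program with P:[] →* e:ρ in the extended graph-generating environment semantics. If e:ρ → e₀:ρ₀, G then e → e₀, G in the approximate extended semantics; and if e:ρ ⇓ e₀:ρ₀, G then e ⇓ e₀, G in the approximate extended semantics. -/
import Mathlib


/- Pure untyped λ-expressions. -/
inductive Exp : Type
  | var : String → Exp
  | app : Exp → Exp → Exp
  | lam : String → Exp → Exp
deriving DecidableEq

namespace Exp
/-- Free variables of a pure λ-expression. -/
def fv : Exp → Finset String
  | var x => {x}
  | app e1 e2 => fv e1 ∪ fv e2
  | lam x e => fv e \ {x}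
end Exp

/- Γ-extended λ-expressions: variables, nonterminals, applications and
abstractions. -/
inductive ExpE : Type
  | var : String → ExpE
  | app : ExpE → ExpE → ExpE
  | lam : String → ExpE → ExpE
  | nt : String → ExpE
deriving DecidableEq

/-- A λ-regular grammar `Γ = (N, Π)`: a finite set of nonterminals and a
finite set of productions `A ::= e`; we assume (as in the paper) that no
production has the form `A ::= A'` with `A'` a nonterminal. -/
structure Grammar where
  N : Set String
  prods : Set (String × ExpE)
  finN : N.Finite
  finProds : prods.Finite
  prods_mem : ∀ p ∈ prods, p.1 ∈ N
  no_nt_prod : ∀ p ∈ prods, ∀ A : String, p.2 ≠ ExpE.nt A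

/-- The derivation relation `e ⇒*_Γ t`, relating Γ-extended expressions to the
pure λ-expressions obtained by replacing every nonterminal occurrence
(independently) by a λ-expression it derives via the productions. -/
inductive Deriv (Γ : Grammar) : ExpE → Exp → Prop
  | var (x : String) : Deriv Γ (ExpE.var x) (Exp.var x)
  | app {a1 a2 : ExpE} {t1 t2 : Exp} :
      Deriv Γ a1 t1 → Deriv Γ a2 t2 → Deriv Γ (ExpE.app a1 a2) (Exp.app t1 t2)
  | lam {x : String} {a : ExpE} {t : Exp} :
      Deriv Γ a t → Deriv Γ (ExpE.lam x a) (Exp.lam x t)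
  | nt {A : String} {e : ExpE} {t : Exp} :
      (A, e) ∈ Γ.prods → Deriv Γ e t → Deriv Γ (ExpE.nt A) t

/-- Free variables of a Γ-extended expression:
`fv(e) = { x | ∃t, e ⇒*_Γ t and x ∈ fv(t) }`. -/
def fvE (Γ : Grammar) (e : ExpE) : Set String :=
  {x | ∃ t, Deriv Γ e t ∧ x ∈ Exp.fv t}
/- Values, environments and states of the Γ-extended environment-based
semantics. -/
inductive ValE : Type
  | clos : String → ExpE → (String → Option ValE) → ValE

abbrev EnvE := String → Option ValE
abbrev StateE := ExpE × EnvE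

/-- An extended value `λx.e:ρ` viewed as an extended state. -/
def ValE.toState : ValE → StateE
  | .clos x e ρ => (ExpE.lam x e, ρ)

/-- The extended-λ-expression component of an extended value. -/
def ValE.toExp : ValE → ExpE
  | .clos x e _ => ExpE.lam x e

def EnvE.update (ρ : EnvE) (x : String) (v : ValE) : EnvE :=
  fun y => if y = x then some v else ρ y

def EnvE.empty : EnvE := fun _ => none
/-- Arc labels: `=` (eq) and `↓` (dec). -/
inductive Lab : Type
  | eq : Lab
  | dec : Lab
deriving DecidableEq

/-- Name paths; here the nodes of generated size-change graphs are `ε = []`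
or single variables `[y]`. -/
abbrev NP := List String
abbrev Arc := NP × Lab × NP
abbrev ArcSet := Set Arc

/-- `id= = {ε =→ ε} ∪ {y =→ y | y ∈ s}`. -/
def idEqS (s : Set String) : ArcSet :=
  {a | a = ([], Lab.eq, []) ∨ ∃ y ∈ s, a = ([y], Lab.eq, [y])}

/-- `id↓ = {ε ↓→ ε} ∪ {y =→ y | y ∈ s}`. -/
def idDecS (s : Set String) : ArcSet :=
  {a | a = ([], Lab.dec, []) ∨ ∃ y ∈ s, a = ([y], Lab.eq, [y])}

/-- The graph `{x =→ ε} ∪ {x ↓→ y | y ∈ s}` of the variable rule. -/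
def varGraphS (x : String) (s : Set String) : ArcSet :=
  {a | a = ([x], Lab.eq, []) ∨ ∃ y ∈ s, a = ([x], Lab.dec, [y])}

/-- `G₁^{-ε/λx.e₀}`: keep arcs between variables, replace `ε r→ z` (`z` a
variable) by `ε ↓→ z`, and, when `x ∉ fv(e₀)`, additionally replace each
arc `p r→ ε` by `p ↓→ ε`.  (`fve0` is `fv(e₀)`.) -/
def GminusS (x : String) (fve0 : Set String) (G1 : ArcSet) : ArcSet :=
  {a | (∃ (y : String) (r : Lab) (z : String), a = ([y], r, [z]) ∧ ([y], r, [z]) ∈ G1) ∨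
       (∃ z : String, a = (([] : NP), Lab.dec, [z]) ∧ ∃ r, (([] : NP), r, [z]) ∈ G1) ∨
       (x ∉ fve0 ∧ ∃ p : NP, a = (p, Lab.dec, ([] : NP)) ∧ ∃ r, (p, r, ([] : NP)) ∈ G1)}

/-- `G₂^{ε↦x}`: `y r→ x` for each `y r→ ε ∈ G₂`, and `ε ↓→ x` for each
`ε r→ ε ∈ G₂`. -/
def GepsS (x : String) (G2 : ArcSet) : ArcSet :=
  {a | (∃ (y : String) (r : Lab), a = ([y], r, [x]) ∧ ([y], r, ([] : NP)) ∈ G2) ∨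
       (a = (([] : NP), Lab.dec, [x]) ∧ ∃ r, (([] : NP), r, ([] : NP)) ∈ G2)}

/-- `∪_{e₀}`: union restricted to arcs whose target is in `fv(e₀) ∪ {ε}`. -/
def unionRS (fve0 : Set String) (A B : ArcSet) : ArcSet :=
  {a | a ∈ A ∪ B ∧ (a.2.2 = ([] : NP) ∨ ∃ y ∈ fve0, a.2.2 = [y])}

/-- The label set `R(x,z)` used in graph composition. -/
def labelsA (G1 G2 : ArcSet) (x z : NP) : Set Lab :=
  {r | ∃ y s, ((x, r, y) ∈ G1 ∧ (y, s, z) ∈ G2) ∨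
              ((x, s, y) ∈ G1 ∧ (y, r, z) ∈ G2)}

/-- Composition `G₁;G₂` of size-change graphs (as arc sets): `x ↓→ z` whenever
`↓ ∈ R(x,z)`, and `x =→ z` whenever `R(x,z) = {=}`. -/
def compA (G1 G2 : ArcSet) : ArcSet :=
  {a | (∃ x z, a = (x, Lab.dec, z) ∧ Lab.dec ∈ labelsA G1 G2 x z) ∨
       (∃ x z, a = (x, Lab.eq, z) ∧ labelsA G1 G2 x z = {Lab.eq})}
/- The extended graph-generating environment semantics (on Γ-extended
expressions), with the (GramG) rule `A:ρ →n e:ρ` for productions `A ::= e`,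
and the (ResultG) rule composing graphs along `→c` and `→n` calls. -/
inductive CallXn (Γ : Grammar) : StateE → StateE → ArcSet → Prop
  | gram {A : String} {e : ExpE} (ρ : EnvE) :
      (A, e) ∈ Γ.prods → CallXn Γ (ExpE.nt A, ρ) (e, ρ) (idEqS (fvE Γ e))

mutual
  inductive EvalX (Γ : Grammar) : StateE → ValE → ArcSet → Prop
    | value (x : String) (e : ExpE) (ρ : EnvE) :
        EvalX Γ (ExpE.lam x e, ρ) (ValE.clos x e ρ) (idEqS (fvE Γ (ExpE.lam x e)))
    | var {ρ : EnvE} {x : String} {v : ValE} :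
        ρ x = some v → EvalX Γ (ExpE.var x, ρ) v (varGraphS x (fvE Γ v.toExp))
    | resultC {s s' : StateE} {v : ValE} {G' G : ArcSet} :
        CallXc Γ s s' G' → EvalX Γ s' v G → EvalX Γ s v (compA G' G)
    | resultN {s s' : StateE} {v : ValE} {G' G : ArcSet} :
        CallXn Γ s s' G' → EvalX Γ s' v G → EvalX Γ s v (compA G' G)
  inductive CallXc (Γ : Grammar) : StateE → StateE → ArcSet → Prop
    | call {e1 e2 : ExpE} {ρ ρ0 : EnvE} {x : String} {e0 : ExpE} {v2 : ValE}
        {G1 G2 : ArcSet} :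
        EvalX Γ (e1, ρ) (ValE.clos x e0 ρ0) G1 → EvalX Γ (e2, ρ) v2 G2 →
        CallXc Γ (ExpE.app e1 e2, ρ) (e0, EnvE.update ρ0 x v2)
          (unionRS (fvE Γ e0) (GminusS x (fvE Γ e0) G1) (GepsS x G2))
end

inductive CallXr (Γ : Grammar) : StateE → StateE → ArcSet → Prop
  | oper (e1 e2 : ExpE) (ρ : EnvE) :
      CallXr Γ (ExpE.app e1 e2, ρ) (e1, ρ) (idDecS (fvE Γ e1))

inductive CallXd (Γ : Grammar) : StateE → StateE → ArcSet → Prop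
  | opnd {e1 : ExpE} {ρ : EnvE} {v1 : ValE} {G1 : ArcSet} (e2 : ExpE) :
      EvalX Γ (e1, ρ) v1 G1 → CallXd Γ (ExpE.app e1 e2, ρ) (e2, ρ) (idDecS (fvE Γ e2))
/-- `SubE Γ e t` means `t ∈ subexps(e)`: subexpressions of a Γ-extended
expression, looking through productions at nonterminals. -/
inductive SubE (Γ : Grammar) : ExpE → ExpE → Prop
  | refl (e : ExpE) : SubE Γ e e
  | lam {x : String} {e t : ExpE} : SubE Γ e t → SubE Γ (ExpE.lam x e) t
  | appL {e1 e2 t : ExpE} : SubE Γ e1 t → SubE Γ (ExpE.app e1 e2) t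
  | appR {e1 e2 t : ExpE} : SubE Γ e2 t → SubE Γ (ExpE.app e1 e2) t
  | nt {A : String} {e t : ExpE} :
      (A, e) ∈ Γ.prods → SubE Γ e t → SubE Γ (ExpE.nt A) t
/- The approximate extended semantics with size-change graphs (environments
removed), for a fixed Γ-extended program `P`. -/
inductive CallAXn (Γ : Grammar) : ExpE → ExpE → ArcSet → Prop
  | gram {A : String} {e : ExpE} :
      (A, e) ∈ Γ.prods → CallAXn Γ (ExpE.nt A) e (idEqS (fvE Γ e))

mutual
  inductive EvalAX (Γ : Grammar) (P : ExpE) : ExpE → ExpE → ArcSet → Prop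
    | value (x : String) (e : ExpE) :
        EvalAX Γ P (ExpE.lam x e) (ExpE.lam x e) (idEqS (fvE Γ (ExpE.lam x e)))
    | var {e1 e2 : ExpE} {x : String} {e0 v2 : ExpE} {G1 G2 : ArcSet} :
        SubE Γ P (ExpE.app e1 e2) →
        EvalAX Γ P e1 (ExpE.lam x e0) G1 → EvalAX Γ P e2 v2 G2 →
        EvalAX Γ P (ExpE.var x) v2 (varGraphS x (fvE Γ v2))
    | resultC {a e' v : ExpE} {G' G : ArcSet} :
        CallAXc Γ P a e' G' → EvalAX Γ P e' v G → EvalAX Γ P a v (compA G' G)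
    | resultN {a e' v : ExpE} {G' G : ArcSet} :
        CallAXn Γ a e' G' → EvalAX Γ P e' v G → EvalAX Γ P a v (compA G' G)
  inductive CallAXc (Γ : Grammar) (P : ExpE) : ExpE → ExpE → ArcSet → Prop
    | call {e1 e2 : ExpE} {x : String} {e0 v2 : ExpE} {G1 G2 : ArcSet} :
        EvalAX Γ P e1 (ExpE.lam x e0) G1 → EvalAX Γ P e2 v2 G2 →
        CallAXc Γ P (ExpE.app e1 e2) e0
          (unionRS (fvE Γ e0) (GminusS x (fvE Γ e0) G1) (GepsS x G2))
end

inductive CallAXr (Γ : Grammar) : ExpE → ExpE → ArcSet → Prop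
  | oper (e1 e2 : ExpE) : CallAXr Γ (ExpE.app e1 e2) e1 (idDecS (fvE Γ e1))

inductive CallAXd (Γ : Grammar) : ExpE → ExpE → ArcSet → Prop
  | opnd (e1 e2 : ExpE) : CallAXd Γ (ExpE.app e1 e2) e2 (idDecS (fvE Γ e2))

/-- The approximate extended call relation `→ = →r ∪ →d ∪ →c ∪ →n`. -/
def CallAXAny (Γ : Grammar) (P : ExpE) (e e' : ExpE) (G : ArcSet) : Prop :=
  CallAXr Γ e e' G ∨ CallAXd Γ e e' G ∨ CallAXc Γ P e e' G ∨ CallAXn Γ e e' G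

/-- The extended call relation `→ = →r ∪ →d ∪ →c ∪ →n` (with graphs). -/
def CallXAny (Γ : Grammar) (s s' : StateE) (G : ArcSet) : Prop :=
  CallXr Γ s s' G ∨ CallXd Γ s s' G ∨ CallXc Γ s s' G ∨ CallXn Γ s s' G

/-- The extended call relation, forgetting the graphs. -/
def CallXU (Γ : Grammar) (s s' : StateE) : Prop := ∃ G, CallXAny Γ s s' G


/-- Transitivity of the subexpression relation. -/
theorem subE_trans (Γ : Grammar) : ∀ {a b c : ExpE}, SubE Γ a b → SubE Γ b c → SubE Γ a c := by
  intro a b c h1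
  induction h1 with
  | refl => exact fun h2 => h2
  | lam _ ih => exact fun h2 => SubE.lam (ih h2)
  | appL _ ih => exact fun h2 => SubE.appL (ih h2)
  | appR _ ih => exact fun h2 => SubE.appR (ih h2)
  | nt hp _ ih => exact fun h2 => SubE.nt hp (ih h2)

/-- A binding `x ↦ v` is justified by an application subexpression of `P`. -/
def TripB (Γ : Grammar) (P : ExpE) (x : String) (v : ValE) : Prop :=
  ∃ e1 e2 e0 G1 G2, SubE Γ P (ExpE.app e1 e2) ∧
    EvalAX Γ P e1 (ExpE.lam x e0) G1 ∧ EvalAX Γ P e2 v.toExp G2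

/-- Good values: closures whose body is a subexpression of `P` and whose
environment binds only good, justified values. -/
inductive GoodVal (Γ : Grammar) (P : ExpE) : ValE → Prop
  | clos (x : String) (e : ExpE) (ρ : EnvE) :
      SubE Γ P (ExpE.lam x e) →
      (∀ y v, ρ y = some v → GoodVal Γ P v) →
      (∀ y v, ρ y = some v → TripB Γ P y v) →
      GoodVal Γ P (ValE.clos x e ρ)

/-- Good environments. -/
def GoodEnv (Γ : Grammar) (P : ExpE) (ρ : EnvE) : Prop :=
  (∀ y v, ρ y = some v → GoodVal Γ P v) ∧ (∀ y v, ρ y = some v → TripB Γ P y v)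

def EProp (Γ : Grammar) (P : ExpE) (s : StateE) (v : ValE) (G : ArcSet) : Prop :=
  SubE Γ P s.1 → GoodEnv Γ P s.2 → EvalAX Γ P s.1 v.toExp G ∧ GoodVal Γ P v

def CProp (Γ : Grammar) (P : ExpE) (s s' : StateE) (G : ArcSet) : Prop :=
  SubE Γ P s.1 → GoodEnv Γ P s.2 →
    CallAXc Γ P s.1 s'.1 G ∧ SubE Γ P s'.1 ∧ GoodEnv Γ P s'.2

theorem mainAux (Γ : Grammar) (P : ExpE) :
    (∀ s v G, EvalX Γ s v G → EProp Γ P s v G) ∧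
    (∀ s s' G, CallXc Γ s s' G → CProp Γ P s s' G) := by
  have hvalue : ∀ (x : String) (e : ExpE) (ρ : EnvE),
      EProp Γ P (ExpE.lam x e, ρ) (ValE.clos x e ρ) (idEqS (fvE Γ (ExpE.lam x e))) := by
    intro x e ρ hsub hρ
    exact ⟨EvalAX.value x e, GoodVal.clos x e ρ hsub hρ.1 hρ.2⟩
  have hvar : ∀ (ρ : EnvE) (x : String) (v : ValE), ρ x = some v →
      EProp Γ P (ExpE.var x, ρ) v (varGraphS x (fvE Γ v.toExp)) := by
    intro ρ x v hx hsub hρ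
    have hg := hρ.1 x v hx
    obtain ⟨e1, e2, e0, G1, G2, hs, h1, h2⟩ := hρ.2 x v hx
    exact ⟨EvalAX.var hs h1 h2, hg⟩
  have hresC : ∀ (s s' : StateE) (v : ValE) (G' G : ArcSet),
      CallXc Γ s s' G' → EvalX Γ s' v G →
      CProp Γ P s s' G' → EProp Γ P s' v G → EProp Γ P s v (compA G' G) := by
    intro s s' v G' G _ _ ihc ihe hsub hρ
    obtain ⟨hc, hs', hρ'⟩ := ihc hsub hρ
    obtain ⟨he, hg⟩ := ihe hs' hρ'
    exact ⟨EvalAX.resultC hc he, hg⟩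
  have hresN : ∀ (s s' : StateE) (v : ValE) (G' G : ArcSet),
      CallXn Γ s s' G' → EvalX Γ s' v G →
      EProp Γ P s' v G → EProp Γ P s v (compA G' G) := by
    intro s s' v G' G hn _ ihe hsub hρ
    cases hn with
    | gram ρ hp =>
      have hs' : SubE Γ P _ := subE_trans Γ hsub (SubE.nt hp (SubE.refl _))
      obtain ⟨he, hg⟩ := ihe hs' hρ
      exact ⟨EvalAX.resultN (CallAXn.gram hp) he, hg⟩
  have hcall : ∀ (e1 e2 : ExpE) (ρ ρ0 : EnvE) (x : String) (e0 : ExpE) (v2 : ValE)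
      (G1 G2 : ArcSet),
      EvalX Γ (e1, ρ) (ValE.clos x e0 ρ0) G1 → EvalX Γ (e2, ρ) v2 G2 →
      EProp Γ P (e1, ρ) (ValE.clos x e0 ρ0) G1 → EProp Γ P (e2, ρ) v2 G2 →
      CProp Γ P (ExpE.app e1 e2, ρ) (e0, EnvE.update ρ0 x v2)
        (unionRS (fvE Γ e0) (GminusS x (fvE Γ e0) G1) (GepsS x G2)) := by
    intro e1 e2 ρ ρ0 x e0 v2 G1 G2 _ _ ih1 ih2 hsub hρ
    have hs1 : SubE Γ P e1 := subE_trans Γ hsub (SubE.appL (SubE.refl e1))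
    have hs2 : SubE Γ P e2 := subE_trans Γ hsub (SubE.appR (SubE.refl e2))
    obtain ⟨ha1, hg1⟩ := ih1 hs1 hρ
    obtain ⟨ha2, hg2⟩ := ih2 hs2 hρ
    cases hg1 with
    | clos _ _ _ hslam hρ0g hρ0t =>
      refine ⟨CallAXc.call ha1 ha2, subE_trans Γ hslam (SubE.lam (SubE.refl e0)), ?_, ?_⟩
      · intro y v hy
        by_cases hxy : y = x
        · subst hxy
          have hv : v2 = v := by simpa [EnvE.update] using hy
          subst hv
          exact hg2
        · have hρy : ρ0 y = some v := by
            have h' := hy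
            simp only [EnvE.update, if_neg hxy] at h'
            exact h'
          exact hρ0g y v hρy
      · intro y v hy
        by_cases hxy : y = x
        · subst hxy
          have hv : v2 = v := by simpa [EnvE.update] using hy
          subst hv
          exact ⟨e1, e2, e0, G1, G2, hsub, ha1, ha2⟩
        · have hρy : ρ0 y = some v := by
            have h' := hy
            simp only [EnvE.update, if_neg hxy] at h'
            exact h'
          exact hρ0t y v hρy
  exact ⟨fun s v G h =>
      EvalX.rec (motive_1 := fun s v G _ => EProp Γ P s v G)
        (motive_2 := fun s s' G _ => CProp Γ P s s' G)
        hvalue (fun {ρ x v} a => hvar ρ x v a)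
        (fun {s s' v G' G} a a1 => hresC s s' v G' G a a1)
        (fun {s s' v G' G} a a1 => hresN s s' v G' G a a1)
        (fun {e1 e2 ρ ρ0 x e0 v2 G1 G2} a a1 => hcall e1 e2 ρ ρ0 x e0 v2 G1 G2 a a1) h,
    fun s s' G h =>
      CallXc.rec (motive_1 := fun s v G _ => EProp Γ P s v G)
        (motive_2 := fun s s' G _ => CProp Γ P s s' G)
        hvalue (fun {ρ x v} a => hvar ρ x v a)
        (fun {s s' v G' G} a a1 => hresC s s' v G' G a a1)
        (fun {s s' v G' G} a a1 => hresN s s' v G' G a a1)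
        (fun {e1 e2 ρ ρ0 x e0 v2 G1 G2} a a1 => hcall e1 e2 ρ ρ0 x e0 v2 G1 G2 a a1) h⟩

theorem reachGood (Γ : Grammar) (P : ExpE) {s : StateE}
    (h : Relation.ReflTransGen (CallXU Γ) (P, EnvE.empty) s) :
    SubE Γ P s.1 ∧ GoodEnv Γ P s.2 := by
  induction h with
  | refl =>
    refine ⟨SubE.refl P, fun y v hy => by simp [EnvE.empty] at hy,
      fun y v hy => by simp [EnvE.empty] at hy⟩
  | tail _ hstep ih =>
    obtain ⟨G, hstep⟩ := hstep
    rcases hstep with h | h | h | h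
    · cases h with
      | oper e1 e2 ρ => exact ⟨subE_trans Γ ih.1 (SubE.appL (SubE.refl e1)), ih.2⟩
    · cases h with
      | opnd e2 h1 => exact ⟨subE_trans Γ ih.1 (SubE.appR (SubE.refl e2)), ih.2⟩
    · obtain ⟨_, hs, hρ⟩ := (mainAux Γ P).2 _ _ _ h ih.1 ih.2
      exact ⟨hs, hρ⟩
    · cases h with
      | gram ρ hp => exact ⟨subE_trans Γ ih.1 (SubE.nt hp (SubE.refl _)), ih.2⟩

/-- Soundness of the approximate extended semantics: for a Γ-extended program
`P`, every call or evaluation (with its size-change graph) from a state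
reachable from `P:[]` is matched, with the same graph, by the approximate
extended semantics. -/
theorem approx_extended_sound (Γ : Grammar) (P : ExpE) (hP : fvE Γ P = ∅) :
    ∀ (e : ExpE) (ρ : EnvE),
      Relation.ReflTransGen (CallXU Γ) (P, EnvE.empty) (e, ρ) →
      (∀ (e0 : ExpE) (ρ0 : EnvE) (G : ArcSet),
        CallXAny Γ (e, ρ) (e0, ρ0) G → CallAXAny Γ P e e0 G) ∧
      (∀ (v : ValE) (G : ArcSet),
        EvalX Γ (e, ρ) v G → EvalAX Γ P e v.toExp G) := by
  intro e ρ hreach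
  obtain ⟨hs, hρ⟩ := reachGood Γ P hreach
  constructor
  · intro e0 ρ0 G hcall
    rcases hcall with h | h | h | h
    · cases h
      exact Or.inl (CallAXr.oper _ _)
    · cases h
      exact Or.inr (Or.inl (CallAXd.opnd _ _))
    · exact Or.inr (Or.inr (Or.inl ((mainAux Γ P).2 _ _ _ h hs hρ).1))
    · cases h
      exact Or.inr (Or.inr (Or.inr (CallAXn.gram (by assumption))))
  · intro v G hev
    exact ((mainAux Γ P).1 _ _ _ hev hs hρ).1
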